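/- Let u : [s,T] × cl(ℝ^d_+) → ℝ be continuous, bounded, and C^{1,2} on (s,T] × ℝ^d_+, satisfying D_t u − 𝓐(t)u ≤ 0 in (s,T] × ℝ^d_+, u(s,·) ≤ 0 on ℝ^d_+, and u ≤ 0 on (s,T] × ∂ℝ^d_+, where 𝓐(t) = Tr(Q(t,x)D²) + ⟨b(t,x),∇⟩ − c(t,x) is uniformly elliptic with c ≥ 0 and admits a Lyapunov function φ(x) = 1+|x|² with 𝓐(t)φ ≤ λφ on [s,T]. Then u ≤ 0 on [s,T] × ℝ^d_+. -/

import Mathlib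

open Set Matrix

set_option maxHeartbeats 1000000

theorem aux_second_deriv_nonpos {g : ℝ → ℝ} {c : ℝ} (hmax : IsLocalMax g 0)
    (hg : ∀ᶠ r in nhds (0:ℝ), DifferentiableAt ℝ g r)
    (hg' : HasDerivAt (deriv g) c 0) : c ≤ 0 := by
  by_contra hc
  push_neg at hc
  have h0 : deriv g 0 = 0 := hmax.deriv_eq_zero
  have hslope := hasDerivAt_iff_tendsto_slope.1 hg'
  have hev : ∀ᶠ r in nhds (0:ℝ), r ≠ 0 → c/2 < slope (deriv g) 0 r :=
    eventually_nhdsWithin_iff.1 (hslope.eventually (eventually_gt_nhds (by linarith)))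
  have hmax' : ∀ᶠ r in nhds (0:ℝ), g r ≤ g 0 := hmax
  obtain ⟨δ, hδ, hball⟩ := Metric.eventually_nhds_iff.1 (hev.and (hg.and hmax'))
  have hd : ∀ r ∈ Ioo (0:ℝ) δ, dist r (0:ℝ) < δ := by
    intro r hr; rw [Real.dist_eq, sub_zero, abs_of_pos hr.1]; exact hr.2
  have hpos : ∀ r ∈ Ioo (0:ℝ) δ, 0 < deriv g r := by
    intro r hr
    have h := (hball (hd r hr)).1 (ne_of_gt hr.1)
    rw [slope_def_field, h0, sub_zero, sub_zero] at h
    rw [lt_div_iff₀ hr.1] at h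
    nlinarith [hr.1]
  have hcontOn : ContinuousOn g (Icc 0 (δ/2)) := by
    intro r hr
    have hrd : dist r (0:ℝ) < δ := by
      rw [Real.dist_eq, sub_zero, abs_of_nonneg hr.1]; linarith [hr.2]
    exact ((hball hrd).2.1).continuousAt.continuousWithinAt
  have hmono : StrictMonoOn g (Icc 0 (δ/2)) := by
    apply strictMonoOn_of_deriv_pos (convex_Icc _ _) hcontOn
    intro r hr
    rw [interior_Icc] at hr
    exact hpos r ⟨hr.1, by linarith [hr.2]⟩
  have h1 : g 0 < g (δ/2) :=
    hmono (left_mem_Icc.2 (by linarith)) (right_mem_Icc.2 (by linarith)) (by linarith)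
  have hend : g (δ/2) ≤ g 0 := by
    have : dist (δ/2) (0:ℝ) < δ := by
      rw [Real.dist_eq, sub_zero, abs_of_pos (by linarith)]; linarith
    exact (hball this).2.2
  linarith

theorem aux_hessian_dir_nonpos {E : Type*} [NormedAddCommGroup E] [NormedSpace ℝ E]
    {f : E → ℝ} {U : Set E} (hU : IsOpen U) {x : E} (hxU : x ∈ U)
    (hf : ContDiffOn ℝ 2 f U) (hmax : IsLocalMax f x) (ξ : E) :
    fderiv ℝ (fderiv ℝ f) x ξ ξ ≤ 0 := by
  have hf1 : ContDiffOn ℝ 1 (fderiv ℝ f) U := hf.fderiv_of_isOpen hU (by norm_num)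
  have hfd : DifferentiableOn ℝ (fderiv ℝ f) U := hf1.differentiableOn one_ne_zero
  have hffd : DifferentiableOn ℝ f U := hf.differentiableOn (by norm_num)
  set line : ℝ → E := fun r => x + r • ξ with hline
  have hline0 : line 0 = x := by simp [hline]
  have hlinecont : Continuous line := by continuity
  have hlineball : ∀ᶠ r in nhds (0:ℝ), line r ∈ U := by
    have : Filter.Tendsto line (nhds 0) (nhds x) := by
      simpa [hline0] using hlinecont.tendsto 0
    exact this.eventually (hU.eventually_mem hxU)
  have hlined : HasDerivAt line ξ 0 := by
    simpa [hline] using ((hasDerivAt_id (0:ℝ)).smul_const ξ).const_add x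
  set g : ℝ → ℝ := fun r => f (line r) with hg
  -- g differentiable near 0, with deriv g r = fderiv f (line r) ξ
  have hgd : ∀ᶠ r in nhds (0:ℝ), HasDerivAt g (fderiv ℝ f (line r) ξ) r := by
    filter_upwards [hlineball] with r hr
    have h1 : HasFDerivAt f (fderiv ℝ f (line r)) (line r) :=
      ((hffd (line r) hr).differentiableAt (hU.mem_nhds hr)).hasFDerivAt
    have h2 : HasDerivAt line ξ r := by
      simpa [hline] using ((hasDerivAt_id r).smul_const ξ).const_add x
    exact h1.comp_hasDerivAt r h2
  have hgdiff : ∀ᶠ r in nhds (0:ℝ), DifferentiableAt ℝ g r := by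
    filter_upwards [hgd] with r hr using hr.differentiableAt
  have hderiveq : deriv g =ᶠ[nhds (0:ℝ)] fun r => fderiv ℝ f (line r) ξ := by
    filter_upwards [hgd] with r hr using hr.deriv
  -- second derivative
  have hB : HasFDerivAt (fderiv ℝ f) (fderiv ℝ (fderiv ℝ f) x) x :=
    ((hfd x hxU).differentiableAt (hU.mem_nhds hxU)).hasFDerivAt
  have h3 : HasDerivAt (fun r => fderiv ℝ f (line r)) (fderiv ℝ (fderiv ℝ f) x ξ) 0 := by
    have hB' : HasFDerivAt (fderiv ℝ f) (fderiv ℝ (fderiv ℝ f) x) (line 0) := by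
      rw [hline0]; exact hB
    exact hB'.comp_hasDerivAt (0:ℝ) hlined
  have h4 : HasDerivAt (fun r => fderiv ℝ f (line r) ξ)
      (fderiv ℝ (fderiv ℝ f) x ξ ξ) 0 := by
    have happ := (ContinuousLinearMap.apply ℝ ℝ ξ).hasFDerivAt.comp_hasDerivAt (0:ℝ) h3
    exact happ
  have h5 : HasDerivAt (deriv g) (fderiv ℝ (fderiv ℝ f) x ξ ξ) 0 := by
    exact h4.congr_of_eventuallyEq hderiveq
  have hmaxg : IsLocalMax g 0 := by
    have : Filter.Tendsto line (nhds 0) (nhds x) := by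
      simpa [hline0] using hlinecont.tendsto 0
    have := this.eventually hmax
    simpa [hg, hline0, IsLocalMax, IsMaxFilter] using this
  exact aux_second_deriv_nonpos hmaxg hgdiff h5

open scoped MatrixOrder Matrix.Norms.L2Operator in
theorem aux_trace_nonpos {d : ℕ} (Q H : Matrix (Fin d) (Fin d) ℝ)
    (hQsymm : Q.IsSymm) (hQpsd : ∀ ξ : Fin d → ℝ, 0 ≤ ξ ⬝ᵥ Q.mulVec ξ)
    (hH : ∀ ξ : Fin d → ℝ, ξ ⬝ᵥ H.mulVec ξ ≤ 0) :
    ∑ i, ∑ j, Q i j * H i j ≤ 0 := by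
  have hQ : Q.PosSemidef := by
    refine Matrix.posSemidef_iff_dotProduct_mulVec.2 ⟨?_, ?_⟩
    · rw [Matrix.IsHermitian, Matrix.conjTranspose]
      simp [Matrix.map]; exact hQsymm.eq
    · intro ξ; simpa using hQpsd ξ
  set S := CFC.sqrt Q with hS
  have hSh : S.IsHermitian := (CFC.sqrt_nonneg Q).posSemidef.1
  have hSsym : ∀ i j, S i j = S j i := fun i j => by
    have := hSh.apply i j; simpa using this.symm
  have hQS : S * S = Q := CFC.sqrt_mul_sqrt_self Q hQ.nonneg
  have e1 : ∀ i j : Fin d, Q i j * H i j = ∑ k, S k i * (H i j * S k j) := by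
    intro i j
    rw [← hQS, Matrix.mul_apply, Finset.sum_mul]
    exact Finset.sum_congr rfl fun k _ => by rw [hSsym i k]; ring
  calc ∑ i, ∑ j, Q i j * H i j
      = ∑ i, ∑ k, ∑ j, S k i * (H i j * S k j) := by
        simp_rw [e1]; exact Finset.sum_congr rfl fun i _ => Finset.sum_comm
    _ = ∑ k, ∑ i, ∑ j, S k i * (H i j * S k j) := Finset.sum_comm
    _ = ∑ k, (fun i => S k i) ⬝ᵥ H.mulVec (fun i => S k i) := by
        apply Finset.sum_congr rfl; intro k _
        simp [dotProduct, Matrix.mulVec, Finset.mul_sum]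
    _ ≤ 0 := Finset.sum_nonpos fun k _ => hH _

theorem keylemma {n : ℕ} (s T : ℝ) (hsT : s < T)
    (u : ℝ → EuclideanSpace ℝ (Fin (n + 1)) → ℝ)
    (Q : ℝ → EuclideanSpace ℝ (Fin (n + 1)) → Matrix (Fin (n + 1)) (Fin (n + 1)) ℝ)
    (b : ℝ → EuclideanSpace ℝ (Fin (n + 1)) → Fin (n + 1) → ℝ)
    (c : ℝ → EuclideanSpace ℝ (Fin (n + 1)) → ℝ)
    (lam : ℝ) (hlam : 0 < lam)
    (hu_cont : ContinuousOn (fun p : ℝ × EuclideanSpace ℝ (Fin (n + 1)) => u p.1 p.2)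
      (Icc s T ×ˢ {x | 0 ≤ x (Fin.last n)}))
    (hu_x : ∀ t ∈ Ioc s T, ContDiffOn ℝ 2 (u t) {x | 0 < x (Fin.last n)})
    (hu_t : ∀ t ∈ Ioc s T, ∀ x, 0 < x (Fin.last n) →
      DifferentiableWithinAt ℝ (fun τ => u τ x) (Ioc s T) t)
    (hc : ∀ t x, 0 ≤ c t x)
    (hQsymm : ∀ t x, (Q t x).IsSymm)
    (hQpos : ∀ t x (ξ : Fin (n + 1) → ℝ), ξ ≠ 0 → 0 < ξ ⬝ᵥ (Q t x).mulVec ξ)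
    (hLyap : ∀ t ∈ Icc s T, ∀ x : EuclideanSpace ℝ (Fin (n + 1)),
      0 ≤ x (Fin.last n) →
      2 * (∑ i, Q t x i i) + 2 * (∑ i, b t x i * x i) - c t x * (1 + ‖x‖ ^ 2)
        ≤ lam * (1 + ‖x‖ ^ 2))
    (hineq : ∀ t ∈ Ioc s T, ∀ x, 0 < x (Fin.last n) →
      derivWithin (fun τ => u τ x) (Ioc s T) t
        - (∑ i, ∑ j, Q t x i j *
            fderiv ℝ (fun y => fderiv ℝ (u t) y (EuclideanSpace.single j 1)) x
              (EuclideanSpace.single i 1))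
        - (∑ i, b t x i * fderiv ℝ (u t) x (EuclideanSpace.single i 1))
        + c t x * u t x ≤ 0)
    (hbdry : ∀ t ∈ Ioc s T, ∀ x, x (Fin.last n) = 0 → u t x ≤ 0)
    (M : ℝ) (hMnn : 0 ≤ M)
    (hM : ∀ t ∈ Icc s T, ∀ x, 0 ≤ x (Fin.last n) → u t x ≤ M)
    (κ : ℝ) (hκdef : κ = lam + 1)
    (U : Set (EuclideanSpace ℝ (Fin (n+1)))) (hUdef : U = {x | 0 < x (Fin.last n)})
    (hUopen : IsOpen U)
    (hCl : IsClosed {x : EuclideanSpace ℝ (Fin (n+1)) | 0 ≤ x (Fin.last n)})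
    (hinit' : ∀ x : EuclideanSpace ℝ (Fin (n+1)), 0 ≤ x (Fin.last n) → u s x ≤ 0) :
    ∀ ε > (0:ℝ), ∀ t ∈ Icc s T, ∀ x : EuclideanSpace ℝ (Fin (n+1)),
      0 ≤ x (Fin.last n) → u t x ≤ ε * (Real.exp (κ*(t-s)) * (1+‖x‖^2)) := by
  classical
  have hκ : 0 < κ := by rw [hκdef]; linarith
  intro ε hε
  by_contra hcon
  push_neg at hcon
  obtain ⟨t₀, ht₀, x₀, hx₀, hgt⟩ := hcon
  set v : ℝ × EuclideanSpace ℝ (Fin (n+1)) → ℝ :=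
    fun p => u p.1 p.2 - ε * (Real.exp (κ*(p.1-s)) * (1+‖p.2‖^2)) with hvdef
  set R : ℝ := Real.sqrt (M/ε) with hRdef
  have hRnn : 0 ≤ R := Real.sqrt_nonneg _
  have hRsq : R^2 = M/ε := Real.sq_sqrt (by positivity)
  -- points where v > 0 lie strictly inside the ball of radius R
  have hball : ∀ t ∈ Icc s T, ∀ x : EuclideanSpace ℝ (Fin (n+1)), 0 ≤ x (Fin.last n) →
      0 < v (t, x) → ‖x‖ < R := by
    intro t ht x hx hv
    have h1 : ε * (Real.exp (κ*(t-s)) * (1+‖x‖^2)) < u t x := by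
      simp only [hvdef] at hv; linarith
    have hexp : 1 ≤ Real.exp (κ*(t-s)) := by
      rw [Real.one_le_exp_iff]
      exact mul_nonneg hκ.le (sub_nonneg.2 ht.1)
    have h2 : ε * (1+‖x‖^2) < M := by
      have h3 := mul_le_mul_of_nonneg_left
        (mul_le_mul_of_nonneg_right hexp (by positivity : (0:ℝ) ≤ 1+‖x‖^2)) hε.le
      have h4 := hM t ht x hx
      rw [one_mul] at h3
      linarith
    have hMR : M = ε * R^2 := by rw [hRsq]; field_simp
    by_contra hge
    push_neg at hge
    have h5 := mul_le_mul_of_nonneg_left (pow_le_pow_left₀ hRnn hge 2) hε.le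
    nlinarith
  set K : Set (ℝ × EuclideanSpace ℝ (Fin (n+1))) :=
    Icc s T ×ˢ ({x | 0 ≤ x (Fin.last n)} ∩ Metric.closedBall 0 R) with hKdef
  have hKsub : K ⊆ Icc s T ×ˢ {x | 0 ≤ x (Fin.last n)} :=
    prod_mono_right (inter_subset_left)
  have hKcomp : IsCompact K :=
    isCompact_Icc.prod ((isCompact_closedBall _ _).inter_left hCl)
  have hvcont : ContinuousOn v K := by
    apply ContinuousOn.sub (hu_cont.mono hKsub)
    exact (continuous_const.mul ((Real.continuous_exp.comp
      (continuous_const.mul (continuous_fst.sub continuous_const))).mul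
      (continuous_const.add ((continuous_snd.norm).pow 2)))).continuousOn
  have hx₀mem : (t₀, x₀) ∈ K := by
    refine ⟨ht₀, hx₀, ?_⟩
    rw [Metric.mem_closedBall, dist_zero_right]
    exact (hball t₀ ht₀ x₀ hx₀ (by simp only [hvdef]; linarith)).le
  obtain ⟨p, hpK, hpmax⟩ := hKcomp.exists_isMaxOn ⟨(t₀,x₀), hx₀mem⟩ hvcont
  obtain ⟨ts, xs⟩ := p
  have htsIcc : ts ∈ Icc s T := hpK.1
  have hxsnn : 0 ≤ xs (Fin.last n) := hpK.2.1
  have hvpos : 0 < v (ts, xs) :=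
    lt_of_lt_of_le (by simp only [hvdef]; linarith) (hpmax hx₀mem)
  have hxsR : ‖xs‖ < R := hball ts htsIcc xs hxsnn hvpos
  have htss : s < ts := by
    rcases eq_or_lt_of_le htsIcc.1 with h | h
    · exfalso
      have : v (ts, xs) ≤ -ε := by
        simp only [hvdef, ← h]
        have h1 := hinit' xs hxsnn
        have hexp : Real.exp (κ*(s-s)) = 1 := by simp
        rw [hexp]
        have h6 : 0 ≤ ε * ‖xs‖^2 := by positivity
        nlinarith
      linarith
    · exact h
  have htsIoc : ts ∈ Ioc s T := ⟨htss, htsIcc.2⟩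
  have hxspos : 0 < xs (Fin.last n) := by
    rcases eq_or_lt_of_le hxsnn with h | h
    · exfalso
      have h1 := hbdry ts htsIoc xs h.symm
      have h6 : 0 < ε * (Real.exp (κ*(ts-s)) * (1+‖xs‖^2)) := by positivity
      have : v (ts, xs) < 0 := by
        simp only [hvdef]
        linarith
      linarith
    · exact h
  set A : ℝ := ε * Real.exp (κ*(ts-s)) with hAdef
  have hA : 0 < A := by positivity
  set φs : ℝ := 1 + ‖xs‖^2 with hφdef
  have hφ1 : 1 ≤ φs := by nlinarith [sq_nonneg ‖xs‖]
  have hφpos : 0 < φs := by linarith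
  set vs : ℝ := v (ts, xs) with hvsdef
  have hus : u ts xs = vs + A * φs := by simp only [hvsdef, hvdef, hAdef, hφdef]; ring
  -- spatial local max of w
  set w : EuclideanSpace ℝ (Fin (n+1)) → ℝ := fun y => u ts y - A * (1 + ‖y‖^2) with hwdef
  have hweq : ∀ y, v (ts, y) = w y := by intro y; simp only [hvdef, hwdef, hAdef]; ring
  have hmaxw : IsLocalMax w xs := by
    have hopen : IsOpen {y : EuclideanSpace ℝ (Fin (n+1)) | 0 < y (Fin.last n) ∧ ‖y‖ < R} :=
      IsOpen.and (isOpen_lt continuous_const (EuclideanSpace.proj (Fin.last n)).continuous)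
        (isOpen_lt continuous_norm continuous_const)
    have hmem : xs ∈ {y : EuclideanSpace ℝ (Fin (n+1)) | 0 < y (Fin.last n) ∧ ‖y‖ < R} :=
      ⟨hxspos, hxsR⟩
    filter_upwards [hopen.eventually_mem hmem] with y hy
    have : (ts, y) ∈ K := ⟨htsIcc, hy.1.le, by
      rw [Metric.mem_closedBall, dist_zero_right]; exact hy.2.le⟩
    have h2 := hpmax this
    rw [← hweq, ← hweq]
    exact h2
  -- time local max and time derivative bound
  set vt : ℝ → ℝ := fun τ => u τ xs - ε * (Real.exp (κ*(τ-s)) * φs) with hvtdef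
  have hvteq : ∀ τ, v (τ, xs) = vt τ := by
    intro τ; simp only [hvdef, hvtdef, hφdef]
  have hmaxon : IsMaxOn vt (Ioc s T) ts := by
    intro τ hτ
    have hmem : (τ, xs) ∈ K := ⟨⟨hτ.1.le, hτ.2⟩, hpK.2⟩
    have h2 := hpmax hmem
    simp only [mem_setOf_eq, ← hvteq]
    exact h2
  have hmaxt : IsLocalMaxOn vt (Ioc s T) ts :=
    hmaxon.filter_mono (Filter.le_principal_iff.2 self_mem_nhdsWithin)
  have hD : DifferentiableWithinAt ℝ (fun τ => u τ xs) (Ioc s T) ts := hu_t ts htsIoc xs hxspos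
  have hexp' : HasDerivAt (fun τ => ε * (Real.exp (κ*(τ-s)) * φs))
      (ε * (Real.exp (κ*(ts-s)) * κ * φs)) ts := by
    have h1 : HasDerivAt (fun τ : ℝ => κ*(τ-s)) κ ts := by
      simpa using ((hasDerivAt_id ts).sub_const s).const_mul κ
    have h2 := h1.exp
    have h3 := (h2.mul_const φs).const_mul ε
    convert h3 using 1
  have hvt' : HasDerivWithinAt vt (derivWithin (fun τ => u τ xs) (Ioc s T) ts
      - ε * (Real.exp (κ*(ts-s)) * κ * φs)) (Ioc s T) ts :=
    (hD.hasDerivWithinAt).sub (hexp'.hasDerivWithinAt)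
  have hcone : ((s - ts)/2) ∈ posTangentConeAt (Ioc s T) ts := by
    apply mem_posTangentConeAt_of_segment_subset
    have he : ts + (s - ts)/2 = (s + ts)/2 := by ring
    rw [he, segment_symm, segment_eq_Icc (by linarith : (s+ts)/2 ≤ ts)]
    intro τ hτ
    exact ⟨by linarith [hτ.1], le_trans hτ.2 htsIcc.2⟩
  have hcone' := hmaxt.hasFDerivWithinAt_nonpos hvt'.hasFDerivWithinAt hcone
  simp only [ContinuousLinearMap.toSpanSingleton_apply, ContinuousLinearMap.smulRight_apply, ContinuousLinearMap.one_apply,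
    smul_eq_mul] at hcone'
  have hDge : ε * (Real.exp (κ*(ts-s)) * κ * φs)
      ≤ derivWithin (fun τ => u τ xs) (Ioc s T) ts := by
    by_contra hlt
    push_neg at hlt
    have h5 : 0 < (s - ts)/2 * (derivWithin (fun τ => u τ xs) (Ioc s T) ts
        - ε * (Real.exp (κ*(ts-s)) * κ * φs)) :=
      mul_pos_of_neg_of_neg (by linarith) (by linarith)
    linarith
  -- spatial gradient
  have hxsU : xs ∈ U := by rw [hUdef]; exact hxspos
  have huC2 : ContDiffOn ℝ 2 (u ts) U := by rw [hUdef]; exact hu_x ts htsIoc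
  have hwC2 : ContDiffOn ℝ 2 w U := by
    apply huC2.sub
    exact (contDiff_const.mul (contDiff_const.add (contDiff_norm_sq ℝ))).contDiffOn
  have hdiffAtU : ∀ y ∈ U, DifferentiableAt ℝ (u ts) y := fun y hy =>
    ((huC2.differentiableOn (by norm_num)) y hy).differentiableAt (hUopen.mem_nhds hy)
  have hdiffwU : ∀ y ∈ U, DifferentiableAt ℝ w y := fun y hy =>
    ((hwC2.differentiableOn (by norm_num)) y hy).differentiableAt (hUopen.mem_nhds hy)
  have hψfd : ∀ y : EuclideanSpace ℝ (Fin (n+1)),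
      HasFDerivAt (fun z : EuclideanSpace ℝ (Fin (n+1)) => A*(1+‖z‖^2))
        (A • (2 • innerSL ℝ y)) y := fun y =>
    (((hasStrictFDerivAt_norm_sq y).hasFDerivAt).const_add 1).const_mul A
  have hgrad0 : fderiv ℝ w xs = 0 := hmaxw.fderiv_eq_zero
  have hw_split : HasFDerivAt w (fderiv ℝ (u ts) xs - A • (2 • innerSL ℝ xs)) xs :=
    ((hdiffAtU xs hxsU).hasFDerivAt).sub (hψfd xs)
  have hfderivu : fderiv ℝ (u ts) xs = A • (2 • innerSL ℝ xs) := by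
    have h1 := hw_split.fderiv
    rw [hgrad0] at h1
    have := sub_eq_zero.1 h1.symm
    exact this
  have hgradi : ∀ i, fderiv ℝ (u ts) xs (EuclideanSpace.single i 1) = 2*A*(xs i) := by
    intro i
    rw [hfderivu]
    simp only [ContinuousLinearMap.smul_apply, smul_eq_mul, innerSL_apply_apply]
    rw [EuclideanSpace.inner_single_right]
    simp; ring
  -- Hessian
  have hwfd1 : ContDiffOn ℝ 1 (fderiv ℝ w) U := hwC2.fderiv_of_isOpen hUopen (by norm_num)
  have hBw : HasFDerivAt (fderiv ℝ w) (fderiv ℝ (fderiv ℝ w) xs) xs :=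
    (((hwfd1.differentiableOn one_ne_zero) xs hxsU).differentiableAt (hUopen.mem_nhds hxsU)).hasFDerivAt
  set Bw := fderiv ℝ (fderiv ℝ w) xs with hBwdef
  have hHessEq : ∀ i j, fderiv ℝ (fun y => fderiv ℝ (u ts) y (EuclideanSpace.single j 1)) xs
        (EuclideanSpace.single i 1)
      = Bw (EuclideanSpace.single i 1) (EuclideanSpace.single j 1)
        + 2*A*((EuclideanSpace.single i (1:ℝ)) j) := by
    intro i j
    have hev : (fun y => fderiv ℝ w y (EuclideanSpace.single j 1) + (2*A)*(y j))
        =ᶠ[nhds xs] (fun y => fderiv ℝ (u ts) y (EuclideanSpace.single j 1)) := by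
      filter_upwards [hUopen.eventually_mem hxsU] with y hyU
      have huy : HasFDerivAt (u ts) (fderiv ℝ w y + A • (2 • innerSL ℝ y)) y := by
        have heq : (u ts) = fun z => w z + A*(1+‖z‖^2) := by
          funext z; simp only [hwdef]; ring
        rw [heq]
        exact ((hdiffwU y hyU).hasFDerivAt).add (hψfd y)
      rw [huy.fderiv]
      simp only [ContinuousLinearMap.add_apply, ContinuousLinearMap.smul_apply,
        smul_eq_mul, innerSL_apply_apply]
      rw [EuclideanSpace.inner_single_right]
      simp; ring
    have h1 : HasFDerivAt (fun y => fderiv ℝ w y (EuclideanSpace.single j 1))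
        ((ContinuousLinearMap.apply ℝ ℝ (EuclideanSpace.single j 1)).comp Bw) xs :=
      ((ContinuousLinearMap.apply ℝ ℝ (EuclideanSpace.single j (1:ℝ))).hasFDerivAt
        (x := fderiv ℝ w xs)).comp xs hBw
    have h2 : HasFDerivAt (fun y : EuclideanSpace ℝ (Fin (n+1)) => (2*A)*(y j))
        ((2*A) • (EuclideanSpace.proj j : EuclideanSpace ℝ (Fin (n+1)) →L[ℝ] ℝ)) xs := by
      simpa using ((EuclideanSpace.proj j : EuclideanSpace ℝ (Fin (n+1)) →L[ℝ] ℝ).hasFDerivAt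
        (x := xs)).const_mul (2*A)
    have h3 : HasFDerivAt (fun y => fderiv ℝ (u ts) y (EuclideanSpace.single j 1))
        (((ContinuousLinearMap.apply ℝ ℝ (EuclideanSpace.single j 1)).comp Bw)
          + (2*A) • (EuclideanSpace.proj j : EuclideanSpace ℝ (Fin (n+1)) →L[ℝ] ℝ)) xs :=
      (h1.add h2).congr_of_eventuallyEq hev.symm
    rw [h3.fderiv]
    simp only [ContinuousLinearMap.add_apply, ContinuousLinearMap.coe_comp', Function.comp_apply,
      ContinuousLinearMap.apply_apply, ContinuousLinearMap.smul_apply, smul_eq_mul]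
    congr 1
  -- Hessian matrix and trace bound
  set H : Matrix (Fin (n+1)) (Fin (n+1)) ℝ :=
    Matrix.of (fun i j => Bw (EuclideanSpace.single i 1) (EuclideanSpace.single j 1)) with hHdef
  have hHneg : ∀ ξ : Fin (n+1) → ℝ, ξ ⬝ᵥ H.mulVec ξ ≤ 0 := by
    intro ξ
    set ξ' : EuclideanSpace ℝ (Fin (n+1)) := ∑ i, ξ i • EuclideanSpace.single i (1:ℝ) with hξ'
    have hd := aux_hessian_dir_nonpos hUopen hxsU hwC2 hmaxw ξ'
    rw [← hBwdef] at hd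
    have e3 : ∀ z : EuclideanSpace ℝ (Fin (n+1)) →L[ℝ] ℝ,
        z ξ' = ∑ j, ξ j * z (EuclideanSpace.single j 1) := by
      intro z
      rw [hξ', map_sum]
      exact Finset.sum_congr rfl fun j _ => by rw [z.map_smul]; simp
    have e1 : Bw ξ' = ∑ i, ξ i • Bw (EuclideanSpace.single i 1) := by
      rw [hξ', map_sum]
      exact Finset.sum_congr rfl fun i _ => Bw.map_smul _ _
    have e2 : Bw ξ' ξ' = ∑ i, ξ i * (Bw (EuclideanSpace.single i 1) ξ') := by
      rw [e1, ContinuousLinearMap.sum_apply]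
      exact Finset.sum_congr rfl fun i _ => by simp
    have hexp : ξ ⬝ᵥ H.mulVec ξ = Bw ξ' ξ' := by
      rw [e2]
      simp only [dotProduct, Matrix.mulVec, Matrix.of_apply, hHdef]
      refine Finset.sum_congr rfl fun i _ => ?_
      rw [e3 (Bw (EuclideanSpace.single i 1)), Finset.mul_sum, Finset.mul_sum]
      refine Finset.sum_congr rfl fun j _ => ?_
      ring
    rw [hexp]
    exact hd
  have hQpsd : ∀ ξ : Fin (n+1) → ℝ, 0 ≤ ξ ⬝ᵥ (Q ts xs).mulVec ξ := by
    intro ξ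
    by_cases hξ : ξ = 0
    · subst hξ; simp
    · exact (hQpos ts xs ξ hξ).le
  have htr : ∑ i, ∑ j, Q ts xs i j * H i j ≤ 0 :=
    aux_trace_nonpos (Q ts xs) H (hQsymm ts xs) hQpsd hHneg
  -- assemble everything
  have hIneq := hineq ts htsIoc xs hxspos
  have hS2 : ∑ i, ∑ j, Q ts xs i j *
      fderiv ℝ (fun y => fderiv ℝ (u ts) y (EuclideanSpace.single j 1)) xs
        (EuclideanSpace.single i 1)
      = (∑ i, ∑ j, Q ts xs i j * H i j) + 2*A*(∑ i, Q ts xs i i) := by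
    rw [Finset.mul_sum, ← Finset.sum_add_distrib]
    apply Finset.sum_congr rfl
    intro i _
    have hterm : ∀ j, Q ts xs i j *
        fderiv ℝ (fun y => fderiv ℝ (u ts) y (EuclideanSpace.single j 1)) xs
          (EuclideanSpace.single i 1)
        = Q ts xs i j * H i j
          + Q ts xs i j * (2*A*((EuclideanSpace.single i (1:ℝ)) j)) := by
      intro j
      rw [hHessEq i j]
      have : H i j = Bw (EuclideanSpace.single i 1) (EuclideanSpace.single j 1) := rfl
      rw [this]
      ring
    rw [Finset.sum_congr rfl (fun j _ => hterm j), Finset.sum_add_distrib]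
    congr 1
    rw [Finset.sum_eq_single i]
    · rw [EuclideanSpace.single_apply, if_pos rfl]
      ring
    · intro j _ hji
      rw [EuclideanSpace.single_apply, if_neg hji]
      ring
    · intro habs
      exact absurd (Finset.mem_univ i) habs
  have hS3 : ∑ i, b ts xs i * fderiv ℝ (u ts) xs (EuclideanSpace.single i 1)
      = 2*A*(∑ i, b ts xs i * xs i) := by
    rw [Finset.mul_sum]
    exact Finset.sum_congr rfl fun i _ => by rw [hgradi i]; ring
  rw [hS2, hS3, hus] at hIneq
  have hLy := hLyap ts htsIcc xs hxsnn
  rw [← hφdef] at hLy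
  have hkey : κ * (A * φs) = ε * (Real.exp (κ*(ts-s)) * κ * φs) := by rw [hAdef]; ring
  have hκA : κ*(A*φs) = lam*(A*φs) + A*φs := by rw [hκdef]; ring
  have hγv : 0 ≤ c ts xs * vs := mul_nonneg (hc ts xs) hvpos.le
  have hLyA := mul_le_mul_of_nonneg_left hLy hA.le
  have hAφ : 0 < A * φs := mul_pos hA hφpos
  nlinarith [hIneq, htr, hDge, hkey, hκA, hγv, hLyA, hAφ]

/-- Maximum principle in the half-space for the nonautonomous operator
`𝓐(t) = Tr(Q(t,x)D²) + ⟨b(t,x),∇⟩ − c(t,x)` with unbounded coefficients,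
`c ≥ 0`, under the Lyapunov condition for `φ(x) = 1 + |x|²`:
a bounded continuous subsolution which is nonpositive at the initial time and
on the lateral boundary is nonpositive everywhere. -/
theorem stmt_7 {n : ℕ} (s T : ℝ) (hsT : s < T)
    (u : ℝ → EuclideanSpace ℝ (Fin (n + 1)) → ℝ)
    (Q : ℝ → EuclideanSpace ℝ (Fin (n + 1)) → Matrix (Fin (n + 1)) (Fin (n + 1)) ℝ)
    (b : ℝ → EuclideanSpace ℝ (Fin (n + 1)) → Fin (n + 1) → ℝ)
    (c : ℝ → EuclideanSpace ℝ (Fin (n + 1)) → ℝ)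
    (lam : ℝ) (hlam : 0 < lam)
    -- continuity and boundedness of `u` on `[s,T] × cl(ℝ^d_+)`
    (hu_cont : ContinuousOn (fun p : ℝ × EuclideanSpace ℝ (Fin (n + 1)) => u p.1 p.2)
      (Icc s T ×ˢ {x | 0 ≤ x (Fin.last n)}))
    (hu_bdd : ∃ M, ∀ t ∈ Icc s T, ∀ x, 0 ≤ x (Fin.last n) → |u t x| ≤ M)
    -- `C^{1,2}` regularity on `(s,T] × ℝ^d_+`
    (hu_x : ∀ t ∈ Ioc s T, ContDiffOn ℝ 2 (u t) {x | 0 < x (Fin.last n)})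
    (hu_t : ∀ t ∈ Ioc s T, ∀ x, 0 < x (Fin.last n) →
      DifferentiableWithinAt ℝ (fun τ => u τ x) (Ioc s T) t)
    -- `c ≥ 0` and ellipticity of the symmetric matrix `Q`
    (hc : ∀ t x, 0 ≤ c t x)
    (hQsymm : ∀ t x, (Q t x).IsSymm)
    (hQpos : ∀ t x (ξ : Fin (n + 1) → ℝ), ξ ≠ 0 → 0 < ξ ⬝ᵥ (Q t x).mulVec ξ)
    -- Lyapunov condition `𝓐(t)φ ≤ λ φ` for `φ(x) = 1 + |x|²`
    (hLyap : ∀ t ∈ Icc s T, ∀ x : EuclideanSpace ℝ (Fin (n + 1)),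
      0 ≤ x (Fin.last n) →
      2 * (∑ i, Q t x i i) + 2 * (∑ i, b t x i * x i) - c t x * (1 + ‖x‖ ^ 2)
        ≤ lam * (1 + ‖x‖ ^ 2))
    -- the parabolic differential inequality `D_t u − 𝓐(t)u ≤ 0`
    (hineq : ∀ t ∈ Ioc s T, ∀ x, 0 < x (Fin.last n) →
      derivWithin (fun τ => u τ x) (Ioc s T) t
        - (∑ i, ∑ j, Q t x i j *
            fderiv ℝ (fun y => fderiv ℝ (u t) y (EuclideanSpace.single j 1)) x
              (EuclideanSpace.single i 1))
        - (∑ i, b t x i * fderiv ℝ (u t) x (EuclideanSpace.single i 1))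
        + c t x * u t x ≤ 0)
    -- initial and boundary conditions
    (hinit : ∀ x, 0 < x (Fin.last n) → u s x ≤ 0)
    (hbdry : ∀ t ∈ Ioc s T, ∀ x, x (Fin.last n) = 0 → u t x ≤ 0) :
    ∀ t ∈ Icc s T, ∀ x, 0 < x (Fin.last n) → u t x ≤ 0 := by

  classical
  obtain ⟨M₀, hM₀⟩ := hu_bdd
  set M : ℝ := max M₀ 0 with hMdef
  have hMnn : 0 ≤ M := le_max_right _ _
  have hM : ∀ t ∈ Icc s T, ∀ x, 0 ≤ x (Fin.last n) → u t x ≤ M := fun t ht x hx =>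
    le_trans (le_trans (le_abs_self _) (hM₀ t ht x hx)) (le_max_left _ _)
  set κ : ℝ := lam + 1 with hκdef
  have hκ : 0 < κ := by linarith
  set U : Set (EuclideanSpace ℝ (Fin (n+1))) := {x | 0 < x (Fin.last n)} with hUdef
  have hUopen : IsOpen U := isOpen_lt continuous_const (EuclideanSpace.proj (Fin.last n)).continuous
  have hCl : IsClosed {x : EuclideanSpace ℝ (Fin (n+1)) | 0 ≤ x (Fin.last n)} :=
    isClosed_le continuous_const (EuclideanSpace.proj (Fin.last n)).continuous
  -- initial condition on the closed half space
  have hinit' : ∀ x : EuclideanSpace ℝ (Fin (n+1)), 0 ≤ x (Fin.last n) → u s x ≤ 0 := by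
    intro x hx
    set seq : ℕ → EuclideanSpace ℝ (Fin (n+1)) :=
      fun k => x + ((k:ℝ)+1)⁻¹ • EuclideanSpace.single (Fin.last n) (1:ℝ) with hseq
    have hlast : ∀ k, seq k (Fin.last n) = x (Fin.last n) + ((k:ℝ)+1)⁻¹ := by
      intro k
      have : ((k:ℝ)+1)⁻¹ • EuclideanSpace.single (Fin.last n) (1:ℝ) =
          EuclideanSpace.single (Fin.last n) (((k:ℝ)+1)⁻¹) := by
        ext j; simp [EuclideanSpace.single_apply, mul_ite]
      simp [hseq, this, EuclideanSpace.single_apply]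
    have hlastpos : ∀ k, 0 < seq k (Fin.last n) := by
      intro k; rw [hlast k]; positivity
    have htend0 : Filter.Tendsto (fun k : ℕ => ((k:ℝ)+1)⁻¹) Filter.atTop (nhds 0) := by
      simpa using tendsto_one_div_add_atTop_nhds_zero_nat (𝕜 := ℝ)
    have htend : Filter.Tendsto seq Filter.atTop (nhds x) := by
      have h1 : Filter.Tendsto (fun k : ℕ => ((k:ℝ)+1)⁻¹ •
          EuclideanSpace.single (Fin.last n) (1:ℝ)) Filter.atTop
          (nhds ((0:ℝ) • EuclideanSpace.single (Fin.last n) (1:ℝ))) :=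
        htend0.smul_const _
      rw [zero_smul] at h1
      simpa [hseq] using (tendsto_const_nhds.add h1)
    have hmem : (s, x) ∈ Icc s T ×ˢ {x : EuclideanSpace ℝ (Fin (n+1)) | 0 ≤ x (Fin.last n)} :=
      ⟨⟨le_rfl, hsT.le⟩, hx⟩
    have hcw := hu_cont _ hmem
    have htend2 : Filter.Tendsto (fun k => ((s, seq k) : ℝ × EuclideanSpace ℝ (Fin (n+1))))
        Filter.atTop (nhdsWithin (s, x) (Icc s T ×ˢ {x | 0 ≤ x (Fin.last n)})) := by
      rw [tendsto_nhdsWithin_iff]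
      rw [nhds_prod_eq]
      refine ⟨(tendsto_const_nhds.prodMk htend), Filter.Eventually.of_forall fun k =>
        ⟨⟨le_rfl, hsT.le⟩, (hlastpos k).le⟩⟩
    have hlim : Filter.Tendsto (fun k => u s (seq k)) Filter.atTop (nhds (u s x)) :=
      hcw.tendsto.comp htend2
    exact le_of_tendsto hlim (Filter.Eventually.of_forall fun k => hinit _ (hlastpos k))
  -- main claim with Lyapunov penalization
  have key : ∀ ε > (0:ℝ), ∀ t ∈ Icc s T, ∀ x : EuclideanSpace ℝ (Fin (n+1)),
      0 ≤ x (Fin.last n) → u t x ≤ ε * (Real.exp (κ*(t-s)) * (1+‖x‖^2)) :=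
    keylemma s T hsT u Q b c lam hlam hu_cont hu_x hu_t hc hQsymm hQpos hLyap hineq hbdry
      M hMnn hM κ hκdef U hUdef hUopen hCl hinit'
  -- conclusion
  intro t ht x hx
  by_contra hpos
  push_neg at hpos
  set C : ℝ := Real.exp (κ*(t-s)) * (1+‖x‖^2) with hCdef
  have hC : 0 < C := by positivity
  have h2 := key (u t x / (2*C)) (by positivity) t ht x hx.le
  rw [← hCdef] at h2
  have : u t x / (2*C) * C = u t x / 2 := by field_simp
  rw [this] at h2
  linarith
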